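/- Let u : [0,1] → ℝ be four times continuously differentiable with u(0)=u(1)=0, u'(1)=0, and u''(0)=0, and let ε > 0. Suppose u''' + ε u'''' = g on (0,1). Then ‖u''‖_{L^∞(0,1)} ≤ C ‖g‖_{L^p(0,1)} for a constant C independent of ε and u, for any fixed p > 1. -/

import Mathlib

open MeasureTheory intervalIntegral

theorem stmt18 (p : ℝ) (hp : 1 < p) :
    ∃ C : ℝ, 0 < C ∧ ∀ ε : ℝ, 0 < ε → ∀ u g : ℝ → ℝ, ContDiff ℝ 4 u →
      u 0 = 0 → u 1 = 0 → deriv u 1 = 0 → iteratedDeriv 2 u 0 = 0 →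
      (∀ x ∈ Set.Ioo (0:ℝ) 1, iteratedDeriv 3 u x + ε * iteratedDeriv 4 u x = g x) →
      ∀ x ∈ Set.Icc (0:ℝ) 1, |iteratedDeriv 2 u x| ≤
        C * ((∫ y in (0:ℝ)..1, |g y|^p) ^ (1/p)) := by
  refine ⟨2, two_pos, ?_⟩
  intro ε hε u g hu hu0 hu1 hu'1 hv0 hODE x hx
  set v : ℝ → ℝ := iteratedDeriv 2 u with hv
  set h : ℝ → ℝ := fun y => iteratedDeriv 3 u y + ε * iteratedDeriv 4 u y with hh
  have hc3 : Continuous (iteratedDeriv 3 u) := hu.continuous_iteratedDeriv 3 (by norm_num)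
  have hc4 : Continuous (iteratedDeriv 4 u) := hu.continuous_iteratedDeriv 4 (by norm_num)
  have hch : Continuous h := hc3.add (continuous_const.mul hc4)
  have hcv : Continuous v := hu.continuous_iteratedDeriv 2 (by norm_num)
  have hd2 : Differentiable ℝ v := hu.differentiable_iteratedDeriv 2 (by norm_num)
  have hd3 : Differentiable ℝ (iteratedDeriv 3 u) := hu.differentiable_iteratedDeriv 3 (by norm_num)
  have e3 : deriv v = iteratedDeriv 3 u := (iteratedDeriv_succ).symm
  have e4 : deriv (iteratedDeriv 3 u) = iteratedDeriv 4 u := (iteratedDeriv_succ).symm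
  set a : ℝ := iteratedDeriv 3 u 0 with ha
  set G : ℝ → ℝ := fun z => ∫ t in (0:ℝ)..z, h t with hG
  have hGderiv : ∀ y : ℝ, HasDerivAt G (h y) y := fun y =>
    intervalIntegral.integral_hasDerivAt_right (hch.intervalIntegrable _ _)
      (hch.stronglyMeasurableAtFilter _ _) hch.continuousAt
  have hGcont : Continuous G := by
    have : Differentiable ℝ G := fun y => (hGderiv y).differentiableAt
    exact this.continuous
  have h1 : ∀ y : ℝ, HasDerivAt v (iteratedDeriv 3 u y) y := fun y => e3 ▸ (hd2 y).hasDerivAt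
  have h2 : ∀ y : ℝ, HasDerivAt (iteratedDeriv 3 u) (iteratedDeriv 4 u y) y := fun y =>
    e4 ▸ (hd3 y).hasDerivAt
  -- Step A: v + ε v' = ε a + G everywhere
  have keyA : ∀ y : ℝ, v y + ε * iteratedDeriv 3 u y = ε * a + G y := by
    have hφ : ∀ y : ℝ, HasDerivAt (fun z => v z + ε * iteratedDeriv 3 u z - G z) 0 y := by
      intro y
      have H : HasDerivAt (fun z => v z + ε * iteratedDeriv 3 u z - G z)
          (iteratedDeriv 3 u y + ε * iteratedDeriv 4 u y - h y) y :=
        ((h1 y).add ((h2 y).const_mul ε)).sub (hGderiv y)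
      simpa [hh] using H
    have hconst := is_const_of_deriv_eq_zero (fun y => (hφ y).differentiableAt)
      (fun y => (hφ y).deriv)
    intro y
    have h0 : v 0 = 0 := hv0
    have hG0 : G 0 = 0 := intervalIntegral.integral_same
    have hcy := hconst y 0
    rw [h0, hG0] at hcy
    linarith [hcy]
  -- Step B: integrating-factor solution formula
  have hB : ∀ y : ℝ, Real.exp (y/ε) * v y
      = ∫ s in (0:ℝ)..y, Real.exp (s/ε) / ε * (ε * a + G s) := by
    set K : ℝ → ℝ := fun s => Real.exp (s/ε) / ε * (ε * a + G s) with hK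
    have hKcont : Continuous K := by fun_prop
    have hKderiv : ∀ y : ℝ, HasDerivAt (fun z => ∫ s in (0:ℝ)..z, K s) (K y) y := fun y =>
      intervalIntegral.integral_hasDerivAt_right (hKcont.intervalIntegrable _ _)
        (hKcont.stronglyMeasurableAtFilter _ _) hKcont.continuousAt
    have hexp : ∀ y : ℝ, HasDerivAt (fun z : ℝ => Real.exp (z/ε)) (Real.exp (y/ε) / ε) y := by
      intro y
      have h0 : HasDerivAt (fun z : ℝ => z/ε) (1/ε) y := (hasDerivAt_id y).div_const ε
      have := (Real.hasDerivAt_exp (y/ε)).comp y h0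
      simpa [div_eq_mul_inv, mul_comm, Function.comp_def] using this
    have hψ : ∀ y : ℝ, HasDerivAt (fun z => Real.exp (z/ε) * v z - ∫ s in (0:ℝ)..z, K s) 0 y := by
      intro y
      have H := ((hexp y).mul (h1 y)).sub (hKderiv y)
      have hval : Real.exp (y/ε) / ε * v y + Real.exp (y/ε) * iteratedDeriv 3 u y - K y = 0 := by
        rw [hK]
        have heq : Real.exp (y/ε) / ε * v y + Real.exp (y/ε) * iteratedDeriv 3 u y
            - Real.exp (y/ε) / ε * (ε * a + G y)
            = Real.exp (y/ε) / ε * ((v y + ε * iteratedDeriv 3 u y) - (ε * a + G y)) := by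
          field_simp
        rw [heq, keyA y, sub_self, mul_zero]
      rwa [hval] at H
    have hconst := is_const_of_deriv_eq_zero (fun y => (hψ y).differentiableAt)
      (fun y => (hψ y).deriv)
    intro y
    have hcy := hconst y 0
    simp only [intervalIntegral.integral_same, hv0, mul_zero, sub_zero] at hcy
    linarith [hcy]
  -- exponential integral
  have hEint : ∀ y : ℝ, (∫ s in (0:ℝ)..y, Real.exp (s/ε)) = ε * (Real.exp (y/ε) - 1) := by
    intro y
    rw [intervalIntegral.integral_comp_div (f := Real.exp) hε.ne']
    simp [integral_exp, smul_eq_mul]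
  set M : ℝ := ∫ t in (0:ℝ)..1, |h t| with hMdef
  set r : ℝ → ℝ := fun s => v s - ε * a * (1 - Real.exp (-(s/ε))) with hr
  have hcr : Continuous r := by fun_prop
  -- formula for the remainder r
  have hrfor : ∀ s : ℝ, r s = Real.exp (-(s/ε)) * ∫ t in (0:ℝ)..s, Real.exp (t/ε) / ε * G t := by
    intro s
    have hsplit : (∫ t in (0:ℝ)..s, Real.exp (t/ε) / ε * (ε * a + G t))
        = ε * a * (Real.exp (s/ε) - 1) + ∫ t in (0:ℝ)..s, Real.exp (t/ε) / ε * G t := by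
      have hfun : (fun t => Real.exp (t/ε) / ε * (ε * a + G t))
          = fun t => a * Real.exp (t/ε) + Real.exp (t/ε) / ε * G t := by
        funext t; field_simp
      rw [hfun, intervalIntegral.integral_add
        (((by fun_prop : Continuous fun t : ℝ => a * Real.exp (t/ε))).intervalIntegrable _ _)
        ((by fun_prop : Continuous fun t : ℝ => Real.exp (t/ε) / ε * G t).intervalIntegrable _ _),
        intervalIntegral.integral_const_mul, hEint]
      ring
    have hB' := hB s
    rw [hsplit] at hB'
    have hmul : Real.exp (-(s/ε)) * Real.exp (s/ε) = 1 := by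
      rw [← Real.exp_add]; norm_num
    show v s - ε * a * (1 - Real.exp (-(s/ε))) = _
    linear_combination Real.exp (-(s/ε)) * hB' + (ε*a - v s) * hmul
  -- bound on G
  have hM0 : 0 ≤ M := by
    rw [hMdef]; exact intervalIntegral.integral_nonneg zero_le_one fun t _ => abs_nonneg _
  have hGb : ∀ s ∈ Set.Icc (0:ℝ) 1, |G s| ≤ M := by
    intro s hs
    have hadd : (∫ t in (0:ℝ)..s, |h t|) + ∫ t in s..1, |h t| = ∫ t in (0:ℝ)..1, |h t| :=
      intervalIntegral.integral_add_adjacent_intervals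
        ((hch.abs).intervalIntegrable _ _) ((hch.abs).intervalIntegrable _ _)
    have h2' : 0 ≤ ∫ t in s..1, |h t| :=
      intervalIntegral.integral_nonneg hs.2 fun t _ => abs_nonneg _
    have h3' : |∫ t in (0:ℝ)..s, h t| ≤ ∫ t in (0:ℝ)..s, |h t| :=
      intervalIntegral.abs_integral_le_integral_abs hs.1
    rw [hG, hMdef]
    simp only
    linarith
  -- bound on r
  have hrb : ∀ s ∈ Set.Icc (0:ℝ) 1, |r s| ≤ M * (1 - Real.exp (-(s/ε))) := by
    intro s hs
    rw [hrfor s]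
    have hJ : |∫ t in (0:ℝ)..s, Real.exp (t/ε) / ε * G t| ≤ M * (Real.exp (s/ε) - 1) := by
      have step1 : |∫ t in (0:ℝ)..s, Real.exp (t/ε) / ε * G t|
          ≤ ∫ t in (0:ℝ)..s, |Real.exp (t/ε) / ε * G t| :=
        intervalIntegral.abs_integral_le_integral_abs hs.1
      have step2 : (∫ t in (0:ℝ)..s, |Real.exp (t/ε) / ε * G t|)
          ≤ ∫ t in (0:ℝ)..s, (M / ε) * Real.exp (t/ε) := by
        apply intervalIntegral.integral_mono_on hs.1
          ((by fun_prop : Continuous fun t : ℝ => |Real.exp (t/ε) / ε * G t|).intervalIntegrable _ _)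
          ((by fun_prop : Continuous fun t : ℝ => (M/ε) * Real.exp (t/ε)).intervalIntegrable _ _)
        intro t ht
        have ht1 : t ∈ Set.Icc (0:ℝ) 1 := ⟨ht.1, ht.2.trans hs.2⟩
        have hpos : 0 < Real.exp (t/ε) / ε := div_pos (Real.exp_pos _) hε
        calc |Real.exp (t/ε) / ε * G t| = Real.exp (t/ε) / ε * |G t| := by
              rw [abs_mul, abs_of_pos hpos]
          _ ≤ Real.exp (t/ε) / ε * M := mul_le_mul_of_nonneg_left (hGb t ht1) hpos.le
          _ = (M / ε) * Real.exp (t/ε) := by ring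
      have step3 : (∫ t in (0:ℝ)..s, (M / ε) * Real.exp (t/ε)) = M * (Real.exp (s/ε) - 1) := by
        rw [intervalIntegral.integral_const_mul, hEint]
        field_simp
      linarith
    have hE : 0 < Real.exp (-(s/ε)) := Real.exp_pos _
    calc |Real.exp (-(s/ε)) * ∫ t in (0:ℝ)..s, Real.exp (t/ε) / ε * G t|
        = Real.exp (-(s/ε)) * |∫ t in (0:ℝ)..s, Real.exp (t/ε) / ε * G t| := by
          rw [abs_mul, abs_of_pos hE]
      _ ≤ Real.exp (-(s/ε)) * (M * (Real.exp (s/ε) - 1)) :=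
          mul_le_mul_of_nonneg_left hJ hE.le
      _ = M * (1 - Real.exp (-(s/ε))) := by
          have hmul : Real.exp (-(s/ε)) * Real.exp (s/ε) = 1 := by
            rw [← Real.exp_add]; norm_num
          linear_combination M * hmul
  -- Step D: constraint ∫ s v = 0 from the boundary conditions
  have hcon : (∫ s in (0:ℝ)..1, s * v s) = 0 := by
    have hc1 : Continuous (deriv u) := by
      have h1' : iteratedDeriv 1 u = deriv u := iteratedDeriv_one
      rw [← h1']; exact hu.continuous_iteratedDeriv 1 (by norm_num)
    have hd1 : Differentiable ℝ (deriv u) := by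
      have h1' : iteratedDeriv 1 u = deriv u := iteratedDeriv_one
      rw [← h1']; exact hu.differentiable_iteratedDeriv 1 (by norm_num)
    have e2 : deriv (deriv u) = v := by
      have h1' : iteratedDeriv 1 u = deriv u := iteratedDeriv_one
      rw [hv, ← h1']; exact (iteratedDeriv_succ).symm
    have hvd : ∀ y : ℝ, HasDerivAt (deriv u) (v y) y := fun y => e2 ▸ (hd1 y).hasDerivAt
    have hparts := intervalIntegral.integral_mul_deriv_eq_deriv_mul
      (u := fun z : ℝ => z) (v := deriv u) (u' := fun _ => (1:ℝ)) (v' := v)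
      (a := 0) (b := 1)
      (fun y _ => hasDerivAt_id y) (fun y _ => hvd y)
      (intervalIntegrable_const) (hcv.intervalIntegrable _ _)
    have hder : (∫ y in (0:ℝ)..1, deriv u y) = u 1 - u 0 :=
      intervalIntegral.integral_deriv_eq_sub
        (fun y _ => hu.differentiable (by norm_num) y)
        (hc1.intervalIntegrable _ _)
    simp only [one_mul] at hparts hder
    rw [hparts, hder, hu0, hu1, hu'1]
    ring
  -- Step E: bound ε |a| ≤ M
  set c : ℝ := ∫ s in (0:ℝ)..1, s * (1 - Real.exp (-(s/ε))) with hcdef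
  have hccont : Continuous fun s : ℝ => s * (1 - Real.exp (-(s/ε))) := by fun_prop
  have hc_pos : 0 < c := by
    rw [hcdef]
    refine intervalIntegral_pos_of_pos_on (hccont.intervalIntegrable _ _) ?_ one_pos
    intro s hs
    refine mul_pos hs.1 (sub_pos.2 ?_)
    rw [← Real.exp_zero]
    exact Real.exp_lt_exp.2 (by rw [neg_lt, neg_zero]; exact div_pos hs.1 hε)
  have hsum : (∫ s in (0:ℝ)..1, s * v s)
      = ε * a * c + ∫ s in (0:ℝ)..1, s * r s := by
    have hfun : (fun s => s * v s)
        = fun s => ε * a * (s * (1 - Real.exp (-(s/ε)))) + s * r s := by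
      funext s
      simp only [hr]
      ring
    have hint1 : IntervalIntegrable (fun s : ℝ => ε * a * (s * (1 - Real.exp (-(s/ε)))))
        volume 0 1 := (continuous_const.mul hccont).intervalIntegrable _ _
    have hint2 : IntervalIntegrable (fun s : ℝ => s * r s) volume 0 1 :=
      Continuous.intervalIntegrable (by fun_prop) _ _
    have haddi := intervalIntegral.integral_add hint1 hint2
    rw [hfun, haddi, intervalIntegral.integral_const_mul]
  have hεa : ε * |a| ≤ M := by
    have h1' : ε * a * c = - ∫ s in (0:ℝ)..1, s * r s := by
      rw [hcon] at hsum; linarith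
    have h2' : |∫ s in (0:ℝ)..1, s * r s| ≤ M * c := by
      have stepa : |∫ s in (0:ℝ)..1, s * r s| ≤ ∫ s in (0:ℝ)..1, |s * r s| :=
        intervalIntegral.abs_integral_le_integral_abs zero_le_one
      have stepb : (∫ s in (0:ℝ)..1, |s * r s|)
          ≤ ∫ s in (0:ℝ)..1, M * (s * (1 - Real.exp (-(s/ε)))) := by
        apply intervalIntegral.integral_mono_on zero_le_one
          (((continuous_id.mul hcr).abs).intervalIntegrable _ _)
          ((continuous_const.mul hccont).intervalIntegrable _ _)
        intro s hs
        calc |s * r s| = s * |r s| := by rw [abs_mul, abs_of_nonneg hs.1]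
          _ ≤ s * (M * (1 - Real.exp (-(s/ε)))) :=
              mul_le_mul_of_nonneg_left (hrb s hs) hs.1
          _ = M * (s * (1 - Real.exp (-(s/ε)))) := by ring
      have stepc : (∫ s in (0:ℝ)..1, M * (s * (1 - Real.exp (-(s/ε))))) = M * c := by
        rw [intervalIntegral.integral_const_mul]
      linarith
    have h3' : ε * |a| * c ≤ M * c := by
      have habs : ε * |a| * c = |ε * a * c| := by
        rw [abs_mul, abs_mul, abs_of_pos hε, abs_of_pos hc_pos]
      rw [habs, h1', abs_neg]
      exact h2'
    exact le_of_mul_le_mul_right h3' hc_pos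
  -- final pointwise bound
  have hex1 : Real.exp (-(x/ε)) ≤ 1 := by
    rw [← Real.exp_zero]
    exact Real.exp_le_exp.2 (neg_nonpos.2 (div_nonneg hx.1 hε.le))
  have hvx : v x = ε * a * (1 - Real.exp (-(x/ε))) + r x := by
    simp only [hr]; ring
  have hbound : |v x| ≤ 2 * M := by
    have hA : |ε * a * (1 - Real.exp (-(x/ε)))| ≤ ε * |a| := by
      rw [abs_mul]
      have h01 : |1 - Real.exp (-(x/ε))| ≤ 1 := by
        rw [abs_le]
        constructor <;> nlinarith [Real.exp_pos (-(x/ε))]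
      calc |ε * a| * |1 - Real.exp (-(x/ε))| ≤ |ε * a| * 1 :=
            mul_le_mul_of_nonneg_left h01 (abs_nonneg _)
        _ = ε * |a| := by rw [mul_one, abs_mul, abs_of_pos hε]
    have hR : |r x| ≤ M := by
      have := hrb x hx
      nlinarith [Real.exp_pos (-(x/ε))]
    calc |v x| = |ε * a * (1 - Real.exp (-(x/ε))) + r x| := by rw [← hvx]
      _ ≤ |ε * a * (1 - Real.exp (-(x/ε)))| + |r x| := abs_add_le _ _
      _ ≤ ε * |a| + M := add_le_add hA hR
      _ ≤ M + M := by linarith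
      _ = 2 * M := by ring
  -- Hölder: M ≤ ‖g‖_{L^p}
  have hM_le : M ≤ (∫ y in (0:ℝ)..1, |g y|^p) ^ (1/p) := by
    set μ : Measure ℝ := volume.restrict (Set.Ioc (0:ℝ) 1) with hμ
    haveI : IsProbabilityMeasure μ := ⟨by
      rw [hμ, Measure.restrict_apply_univ, Real.volume_Ioc]; norm_num⟩
    have hpq : p.HolderConjugate (Real.conjExponent p) := Real.HolderConjugate.conjExponent hp
    obtain ⟨C0, hC0⟩ : ∃ C0, ∀ y ∈ Set.Icc (0:ℝ) 1, ‖|h y|‖ ≤ C0 := by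
      rcases (isCompact_Icc (a := (0:ℝ)) (b := 1)).exists_bound_of_continuousOn
        (hch.abs.continuousOn) with ⟨C0, hC0⟩
      exact ⟨C0, hC0⟩
    have hhm : MemLp (fun t => |h t|) (ENNReal.ofReal p) μ := by
      apply MemLp.of_bound (hch.abs.aestronglyMeasurable) C0
      filter_upwards [ae_restrict_mem measurableSet_Ioc] with y hy
      exact hC0 y ⟨hy.1.le, hy.2⟩
    have h1m : MemLp (fun _ : ℝ => (1:ℝ)) (ENNReal.ofReal (Real.conjExponent p)) μ :=
      memLp_const 1
    have hHolder := integral_mul_le_Lp_mul_Lq_of_nonneg hpq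
      (ae_of_all μ fun t => abs_nonneg (h t)) (ae_of_all μ fun _ => zero_le_one) hhm h1m
    simp only [mul_one, Real.one_rpow, MeasureTheory.integral_const, measure_univ,
      ENNReal.toReal_one, one_smul, smul_eq_mul, probReal_univ] at hHolder
    have hL : M = ∫ t, |h t| ∂μ := by
      rw [hMdef, intervalIntegral.integral_of_le zero_le_one]
    have hR : (∫ t, |h t|^p ∂μ) = ∫ y in (0:ℝ)..1, |g y|^p := by
      rw [intervalIntegral.integral_of_le zero_le_one]
      show (∫ t in Set.Ioc (0:ℝ) 1, |h t|^p) = ∫ y in Set.Ioc (0:ℝ) 1, |g y|^p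
      rw [← setIntegral_congr_set (Ioo_ae_eq_Ioc (a := (0:ℝ)) (b := 1)),
        ← setIntegral_congr_set (Ioo_ae_eq_Ioc (a := (0:ℝ)) (b := 1))]
      exact setIntegral_congr_fun measurableSet_Ioo fun y hy => by rw [show h y = g y from hODE y hy]
    calc M = ∫ t, |h t| ∂μ := hL
      _ ≤ (∫ t, |h t|^p ∂μ) ^ (1/p) := hHolder
      _ = (∫ y in (0:ℝ)..1, |g y|^p) ^ (1/p) := by rw [hR]
  calc |v x| ≤ 2 * M := hbound
    _ ≤ 2 * ((∫ y in (0:ℝ)..1, |g y|^p) ^ (1/p)) :=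
        mul_le_mul_of_nonneg_left hM_le (by norm_num)
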